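/- Consider the real 4×4 matrix J = !![1, 0, −7, 0; 0, −5, 0, 3; 7, 0, −4, 0; 0, −3, 0, −12] (the game Jacobian at the origin of the zero-sum game with cost f(x,y) = −x₁²/2 + 5x₂²/2 + 7y₁x₁ − 3y₂x₂ − 2y₁² − 6y₂², in coordinates (x₁, x₂, y₁, y₂)). Then every complex eigenvalue of J has negative real part (J is Hurwitz), yet the upper-left 2×2 block !![1, 0; 0, −5] is not negative definite. Hence the origin is an exponentially stable fixed point of gradient play but not a differential Nash equilibrium. -/

import Mathlib

/-- A real matrix is Hurwitz (stable) if every eigenvalue of the matrix,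
viewed as a matrix over `ℂ`, has negative real part. -/
def IsHurwitz {n : ℕ} (J : Matrix (Fin n) (Fin n) ℝ) : Prop :=
  ∀ μ ∈ spectrum ℂ (J.map Complex.ofReal), μ.re < 0

/-- Routh–Hurwitz for quadratics: a root of `X² + bX + c` with `b, c > 0`
has negative real part. -/
lemma quad_root_re_neg (b c : ℝ) (hb : 0 < b) (hc : 0 < c) (μ : ℂ)
    (h : μ^2 + b*μ + c = 0) : μ.re < 0 := by
  have him : (μ^2 + b*μ + c).im = 0 := by rw [h]; simp
  have hre : (μ^2 + b*μ + c).re = 0 := by rw [h]; simp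
  simp [Complex.add_im, Complex.mul_im, Complex.add_re, Complex.mul_re, pow_two] at him hre
  by_cases hy : μ.im = 0
  · by_contra hx
    push_neg at hx
    simp [hy] at hre
    nlinarith
  · have h2 : μ.im * (2*μ.re + b) = 0 := by ring_nf; ring_nf at him; linarith
    rcases mul_eq_zero.1 h2 with h3 | h3
    · exact absurd h3 hy
    · linarith

set_option maxHeartbeats 2000000 in
lemma charpoly_factored (μ : ℂ)
    (h : μ ∈ spectrum ℂ
      ((!![(1 : ℝ), 0, -7, 0; 0, -5, 0, 3; 7, 0, -4, 0; 0, -3, 0, -12]).map Complex.ofReal)) :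
    (μ^2 + 3*μ + 45) * (μ^2 + 17*μ + 69) = 0 := by
  rw [spectrum.mem_iff] at h
  rw [Matrix.isUnit_iff_isUnit_det] at h
  rw [isUnit_iff_ne_zero, not_not] at h
  rw [Matrix.algebraMap_eq_diagonal] at h
  simp only [Matrix.det_succ_row_zero, Fin.sum_univ_succ] at h
  norm_num [Matrix.map_apply, Matrix.diagonal, Matrix.sub_apply, Fin.succAbove, Fin.lt_def,
    Fin.ext_iff, Matrix.cons_val] at h
  simp only [Matrix.cons_val_two, Matrix.cons_val_zero, Matrix.cons_val_one, Matrix.head_cons,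
    Matrix.tail_cons, Matrix.vecHead, Matrix.vecTail, Fin.castSucc, Fin.castAdd, Fin.castLE] at h
  norm_num at h
  linear_combination h

theorem example_stable_but_not_nash :
    IsHurwitz !![(1 : ℝ), 0, -7, 0; 0, -5, 0, 3; 7, 0, -4, 0; 0, -3, 0, -12] ∧
      ¬ Matrix.PosDef (-(!![(1 : ℝ), 0; 0, -5])) := by
  constructor
  · intro μ hμ
    rcases mul_eq_zero.1 (charpoly_factored μ hμ) with h | h
    · exact quad_root_re_neg 3 45 (by norm_num) (by norm_num) μ (by push_cast; linear_combination h)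
    · exact quad_root_re_neg 17 69 (by norm_num) (by norm_num) μ
        (by push_cast; linear_combination h)
  · intro h
    have h2 := h.dotProduct_mulVec_pos (x := ![1, 0]) (by
      intro hx
      have := congrFun hx 0
      simp at this)
    simp [Matrix.mulVec, dotProduct, Fin.sum_univ_succ] at h2
    linarith
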